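/- Let k be a field, let V and W be k-vector spaces (not necessarily finite-dimensional), and let B_1 and B_2 be bilinear forms on V and W respectively. Let B_1 ⊗ B_2 denote the bilinear form on V ⊗_k W determined by (B_1 ⊗ B_2)(v ⊗ w, v' ⊗ w') = B_1(v,v') · B_2(w,w'). Then the radical of B_1 ⊗ B_2 equals the sum of the images of rad(B_1) ⊗_k W and V ⊗_k rad(B_2) in V ⊗_k W. -/

import Mathlib

open TensorProduct LinearMap Module


open TensorProduct LinearMap Module

/-- Over a field, the natural map `Dual V ⊗ Dual W → Dual (V ⊗ W)` has trivial kernel. -/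
lemma dualDistrib_injective_aux {k V W : Type*} [Field k]
    [AddCommGroup V] [Module k V] [AddCommGroup W] [Module k W] :
    ∀ x : Dual k V ⊗[k] Dual k W, TensorProduct.dualDistrib k V W x = 0 → x = 0 := by
  intro x hx
  classical
  -- choose a basis of `Dual k V`
  obtain ⟨⟨ι, b⟩⟩ := Module.Free.exists_basis (R := k) (M := Dual k V)
  -- transport `x` to `ι →₀ Dual k W`
  set e : Dual k V ⊗[k] Dual k W ≃ₗ[k] (ι →₀ Dual k W) :=
    (TensorProduct.congr b.repr (LinearEquiv.refl k (Dual k W))).trans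
      (finsuppScalarLeft k (Dual k W) ι)
  have hsymm : ∀ (i : ι) (φ : Dual k W),
      e.symm (Finsupp.single i φ) = b i ⊗ₜ[k] φ := by
    intro i φ
    simp only [e, LinearEquiv.trans_symm, LinearEquiv.trans_apply,
      finsuppScalarLeft_symm_apply_single, TensorProduct.congr_symm_tmul,
      LinearEquiv.refl_symm, LinearEquiv.refl_apply]
    rw [← Basis.repr_self b i, LinearEquiv.symm_apply_apply]
  set g : ι →₀ Dual k W := e x with hgdef
  have hx' : x = g.sum fun i φ => b i ⊗ₜ[k] φ := by
    have : x = e.symm (g.sum fun i φ => Finsupp.single i φ) := by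
      rw [Finsupp.sum_single, hgdef, LinearEquiv.symm_apply_apply]
    rw [this, map_finsuppSum]
    exact Finsupp.sum_congr fun i _ => hsymm i _
  -- evaluate the hypothesis
  have key : ∀ i, g i = 0 := by
    intro i
    have hw : ∀ w : W, (g.sum fun j φ => (φ w) • b j) = 0 := by
      intro w
      ext v
      have h0 : (TensorProduct.dualDistrib k V W x) (v ⊗ₜ[k] w) = 0 := by rw [hx]; rfl
      rw [hx', map_finsuppSum] at h0
      simpa [Finsupp.sum_apply, TensorProduct.dualDistrib_apply, mul_comm,
        Finsupp.sum] using h0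
    ext w
    have hlc := linearIndependent_iff.mp b.linearIndependent
      (g.mapRange (fun φ => φ w) rfl) ?_
    · have := DFunLike.congr_fun hlc i
      simpa using this
    · rw [Finsupp.linearCombination_apply]
      rw [Finsupp.sum_mapRange_index (by simp)]
      exact hw w
  have : g = 0 := Finsupp.ext key
  rw [hx', this, Finsupp.sum_zero_index]

set_option synthInstance.maxHeartbeats 400000 in
/-- Let `k` be a field, `V, W` vector spaces with bilinear forms `B₁, B₂`, and let
`B` be the bilinear form on `V ⊗ W` determined by
`B(v ⊗ w, v' ⊗ w') = B₁(v,v') · B₂(w,w')`.  Then the radical of `B` is the sum of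
the images of `rad(B₁) ⊗ W` and `V ⊗ rad(B₂)` in `V ⊗ W`. -/
theorem ker_tensor_bilinear_form
    {k V W : Type*} [Field k]
    [AddCommGroup V] [Module k V] [AddCommGroup W] [Module k W]
    (B₁ : V →ₗ[k] V →ₗ[k] k) (B₂ : W →ₗ[k] W →ₗ[k] k)
    (B : (V ⊗[k] W) →ₗ[k] (V ⊗[k] W) →ₗ[k] k)
    (hB : ∀ (v v' : V) (w w' : W),
      B (v ⊗ₜ[k] w) (v' ⊗ₜ[k] w') = B₁ v v' * B₂ w w') :
    LinearMap.ker B =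
      LinearMap.range
          (TensorProduct.map (LinearMap.ker B₁).subtype (LinearMap.id : W →ₗ[k] W)) ⊔
        LinearMap.range
          (TensorProduct.map (LinearMap.id : V →ₗ[k] V) (LinearMap.ker B₂).subtype) := by
  -- `B` factors through the dual distribution map
  have hcomp : B = (TensorProduct.dualDistrib k V W).comp (TensorProduct.map B₁ B₂) := by
    ext v w v' w'
    simp [hB, TensorProduct.dualDistrib_apply]
  have hker0 : LinearMap.ker (TensorProduct.dualDistrib k V W) = ⊥ := by
    ext x
    simp only [LinearMap.mem_ker, Submodule.mem_bot]
    exact ⟨fun h => dualDistrib_injective_aux x h, fun h => by simp [h]⟩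
  have hker1 : LinearMap.ker B = LinearMap.ker (TensorProduct.map B₁ B₂) := by
    rw [hcomp, LinearMap.ker_comp, hker0, Submodule.comap_bot]
  -- factor `map B₁ B₂` through the range restrictions
  have hfac : TensorProduct.map B₁ B₂ =
      (TensorProduct.map (LinearMap.range B₁).subtype (LinearMap.range B₂).subtype).comp
        (TensorProduct.map B₁.rangeRestrict B₂.rangeRestrict) := by
    rw [← TensorProduct.map_comp, LinearMap.subtype_comp_codRestrict,
      LinearMap.subtype_comp_codRestrict]
  have hinj : LinearMap.ker (TensorProduct.map (LinearMap.range B₁).subtype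
      (LinearMap.range B₂).subtype) = ⊥ := by
    apply LinearMap.ker_eq_bot_of_injective
    rw [← LinearMap.lTensor_comp_rTensor, LinearMap.coe_comp]
    haveI : Module.Flat k (LinearMap.range B₁) :=
      @Module.Flat.of_free k _ _ _ _ (Module.Free.of_divisionRing k (LinearMap.range B₁))
    haveI : Module.Flat k (LinearMap.range B₂) :=
      @Module.Flat.of_free k _ _ _ _ (Module.Free.of_divisionRing k (LinearMap.range B₂))
    exact (Module.Flat.lTensor_preserves_injective_linearMap _
        (Submodule.injective_subtype _)).comp
      (Module.Flat.rTensor_preserves_injective_linearMap _ (Submodule.injective_subtype _))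
  have hker2 : LinearMap.ker (TensorProduct.map B₁ B₂) =
      LinearMap.ker (TensorProduct.map B₁.rangeRestrict B₂.rangeRestrict) := by
    rw [hfac, LinearMap.ker_comp, hinj, Submodule.comap_bot]
  have e1 : Function.Exact (LinearMap.ker B₁).subtype B₁.rangeRestrict := by
    have h := @LinearMap.exact_subtype_ker_map k V (LinearMap.range B₁) _ _ _ _ _ B₁.rangeRestrict
    rwa [LinearMap.ker_rangeRestrict] at h
  have e2 : Function.Exact (LinearMap.ker B₂).subtype B₂.rangeRestrict := by
    have h := @LinearMap.exact_subtype_ker_map k W (LinearMap.range B₂) _ _ _ _ _ B₂.rangeRestrict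
    rwa [LinearMap.ker_rangeRestrict] at h
  have hmk := TensorProduct.map_ker (P := LinearMap.range B₁) (P' := LinearMap.range B₂) e1 B₁.surjective_rangeRestrict e2
    B₂.surjective_rangeRestrict
  rw [hker1, hker2, hmk, sup_comm]
  rfl
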